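/- Fix a cube Λ of side L > 0, q ≥ 0, and η ≥ 0. On the open set {ρ ≥ 0 : σ(q,ρ) > 0}, the map ρ ↦ p²_Λ(q,ρ,η) is differentiable and its derivative equals −(v/V) Σ_{k∈Λ*} { (e^{β E(k,q,ρ)} − 1)^{−1} · f(k,ρ)/E(k,q,ρ) + (1/2)( f(k,ρ)/E(k,q,ρ) − 1 ) } − v η²/(f(0,ρ) − uq)² + vρ; that is, the infinite lattice sums defining p²_Λ may be differentiated term by term in ρ. -/

import Mathlib

open MeasureTheory Real Filter Topology

noncomputable section

namespace PB

abbrev Kspace (ν : ℕ) : Type := EuclideanSpace ℝ (Fin ν)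

/-- kinetic energy `ε(k) = ‖k‖²/(2m)` -/
def eps (ν : ℕ) (m : ℝ) (k : Kspace ν) : ℝ := ‖k‖ ^ 2 / (2 * m)

/-- `f(k,ρ) = ε(k) − μ + vρ` -/
def fF (ν : ℕ) (m μ v : ℝ) (k : Kspace ν) (ρ : ℝ) : ℝ := eps ν m k - μ + v * ρ

/-- `E(k,q,ρ) = (f(k,ρ)² − u²q²|λ(k)|²)^{1/2}` -/
def eE (ν : ℕ) (m μ v u : ℝ) (lam : Kspace ν → ℂ) (k : Kspace ν) (q ρ : ℝ) : ℝ :=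
  Real.sqrt (fF ν m μ v k ρ ^ 2 - u ^ 2 * q ^ 2 * ‖lam k‖ ^ 2)

/-- `σ(q,ρ) = vρ − μ − |u|q` -/
def sigma0 (μ v u q ρ : ℝ) : ℝ := v * ρ - μ - |u| * q

/-- The point `(2π/L)·z` of the dual lattice `Λ* = (2π/L)ℤ^ν`. -/
def latticePt (ν : ℕ) (L : ℝ) (z : Fin ν → ℤ) : Kspace ν :=
  (WithLp.equiv 2 (Fin ν → ℝ)).symm fun i => (2 * π / L) * (z i : ℝ)

/-- integrand of the limiting approximating pressure -/
def p2Int (ν : ℕ) (m μ v u β : ℝ) (lam : Kspace ν → ℂ) (q ρ : ℝ) (k : Kspace ν) : ℝ :=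
  -β⁻¹ * Real.log (1 - Real.exp (-β * eE ν m μ v u lam k q ρ))
    - (eE ν m μ v u lam k q ρ - fF ν m μ v k ρ) / 2

/-- `p²(q,ρ)`, the limiting approximating pressure -/
def p2 (ν : ℕ) (m μ v u β : ℝ) (lam : Kspace ν → ℂ) (q ρ : ℝ) : ℝ :=
  (∫ k : Kspace ν, ((2 * π) ^ ν)⁻¹ * p2Int ν m μ v u β lam q ρ k)
    - u / 2 * q ^ 2 + v / 2 * ρ ^ 2

/-- `p²(q,ρ,η) = p²(q,ρ) + η²/(f(0,ρ) − uq)` -/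
def p2eta (ν : ℕ) (m μ v u β : ℝ) (lam : Kspace ν → ℂ) (q ρ η : ℝ) : ℝ :=
  p2 ν m μ v u β lam q ρ + η ^ 2 / (fF ν m μ v 0 ρ - u * q)

/-- `p²_Λ(q,ρ)`, the finite-volume approximating pressure (cube of side `L`, `V = L^ν`) -/
def p2L (ν : ℕ) (m μ v u β L : ℝ) (lam : Kspace ν → ℂ) (q ρ : ℝ) : ℝ :=
  -(β * L ^ ν)⁻¹ *
      (∑' z : Fin ν → ℤ,
        Real.log (1 - Real.exp (-β * eE ν m μ v u lam (latticePt ν L z) q ρ)))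
    - (2 * L ^ ν)⁻¹ *
      (∑' z : Fin ν → ℤ,
        (eE ν m μ v u lam (latticePt ν L z) q ρ - fF ν m μ v (latticePt ν L z) ρ))
    - u / 2 * q ^ 2 + v / 2 * ρ ^ 2

/-- `p²_Λ(q,ρ,η) = p²_Λ(q,ρ) + η²/(f(0,ρ) − uq)` -/
def p2Leta (ν : ℕ) (m μ v u β L : ℝ) (lam : Kspace ν → ℂ) (q ρ η : ℝ) : ℝ :=
  p2L ν m μ v u β L lam q ρ + η ^ 2 / (fF ν m μ v 0 ρ - u * q)



lemma coord_le_norm (ν : ℕ) (L : ℝ) (z : Fin ν → ℤ) (i : Fin ν) :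
    |(2 * π / L) * (z i : ℝ)| ≤ ‖latticePt ν L z‖ := by
  have h : ‖latticePt ν L z‖ = Real.sqrt (∑ j, ((2 * π / L) * (z j : ℝ)) ^ 2) := by
    rw [EuclideanSpace.norm_eq]
    congr 1
    refine Finset.sum_congr rfl fun j _ => ?_
    rw [latticePt]
    simp only [WithLp.equiv_symm_apply, PiLp.toLp_apply, Real.norm_eq_abs, sq_abs]
  rw [h, ← Real.sqrt_sq_eq_abs]
  apply Real.sqrt_le_sqrt
  exact Finset.single_le_sum (f := fun j => ((2 * π / L) * (z j : ℝ)) ^ 2)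
    (fun j _ => sq_nonneg _) (Finset.mem_univ i)

lemma sum_abs_le_norm (ν : ℕ) (L : ℝ) (hL : 0 < L) (hν : 1 ≤ ν) (z : Fin ν → ℤ) :
    (2 * π / L) / ν * (∑ i, |(z i : ℝ)|) ≤ ‖latticePt ν L z‖ := by
  have hM : 0 < 2 * π / L := by positivity
  have h1 : ∑ i, (2 * π / L) * |(z i : ℝ)| ≤ ∑ i : Fin ν, ‖latticePt ν L z‖ := by
    refine Finset.sum_le_sum fun i _ => ?_
    have := coord_le_norm ν L z i
    rwa [abs_mul, abs_of_pos hM] at this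
  rw [Finset.sum_const, Finset.card_univ, Fintype.card_fin, ← Finset.mul_sum] at h1
  have hν' : (0:ℝ) < ν := by exact_mod_cast hν
  rw [div_mul_eq_mul_div, div_le_iff₀ hν']
  calc 2 * π / L * ∑ i, |(z i : ℝ)| ≤ ν • ‖latticePt ν L z‖ := h1
    _ = ‖latticePt ν L z‖ * ν := by rw [nsmul_eq_mul]; ring

lemma summable_pi_prod {g : ℤ → ℝ} (hg0 : ∀ n, 0 ≤ g n) (hg : Summable g) :
    ∀ n : ℕ, Summable (fun z : Fin n → ℤ => ∏ i, g (z i)) := by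
  intro n
  induction n with
  | zero => exact Summable.of_finite
  | succ n ih =>
      have h := hg.mul_of_nonneg ih hg0 (fun z => Finset.prod_nonneg fun i _ => hg0 _)
      refine ((Fin.consEquiv (fun _ : Fin (n+1) => ℤ)).summable_iff
        (f := fun z : Fin (n+1) → ℤ => ∏ i, g (z i))).1 ?_
      have key : ∀ p : ℤ × (Fin n → ℤ),
          (∏ i, g ((Fin.cons p.1 p.2 : Fin (n+1) → ℤ) i)) = g p.1 * ∏ i, g (p.2 i) := by
        intro p
        rw [Fin.prod_univ_succ]
        simp
      simpa [Function.comp_def, Fin.consEquiv, key] using h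

lemma summable_coord_exp {a : ℝ} (ha : 0 < a) :
    Summable (fun n : ℤ => Real.exp (-(a * |(n : ℝ)|))) := by
  have key : ∀ n : ℤ, Real.exp (-(a * |(n : ℝ)|)) = Real.exp (-a) ^ n.natAbs := by
    intro n
    rw [← Real.exp_nat_mul]
    congr 1
    have : |(n : ℝ)| = (n.natAbs : ℝ) := by
      rw [Nat.cast_natAbs, Int.cast_abs]
    rw [this]
    ring
  simp_rw [key]
  refine Summable.of_nat_of_neg ?_ ?_ <;>
  · simpa using summable_geometric_of_lt_one (Real.exp_pos _).le
      (Real.exp_lt_one_iff.mpr (by linarith : -a < 0))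

lemma summable_exp_lattice (ν : ℕ) (hν : 1 ≤ ν) (L : ℝ) (hL : 0 < L) {c' : ℝ} (hc : 0 < c') :
    Summable (fun z : Fin ν → ℤ => Real.exp (-(c' * ‖latticePt ν L z‖))) := by
  set M : ℝ := (2 * π / L) / ν with hMdef
  have hM : 0 < M := by
    have hν' : (0:ℝ) < ν := by exact_mod_cast hν
    positivity
  have hsum := summable_pi_prod (g := fun n : ℤ => Real.exp (-(c' * M * |(n : ℝ)|)))
    (fun n => (Real.exp_pos _).le) (summable_coord_exp (by positivity)) ν
  refine Summable.of_nonneg_of_le (fun z => (Real.exp_pos _).le) (fun z => ?_) hsum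
  have h1 : M * (∑ i, |(z i : ℝ)|) ≤ ‖latticePt ν L z‖ := sum_abs_le_norm ν L hL hν z
  have h2 : Real.exp (-(c' * ‖latticePt ν L z‖)) ≤
      Real.exp (-(c' * (M * ∑ i, |(z i : ℝ)|))) := by
    apply Real.exp_le_exp.2
    nlinarith
  refine h2.trans (le_of_eq ?_)
  rw [← Real.exp_sum]
  congr 1
  rw [Finset.sum_neg_distrib, neg_inj, Finset.mul_sum, Finset.mul_sum]
  exact Finset.sum_congr rfl fun i _ => by ring

lemma summable_coord_rpow {s : ℝ} (hs : 1 < s) :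
    Summable (fun n : ℤ => (1 + |(n : ℝ)|) ^ (-s)) := by
  have hnat : Summable (fun n : ℕ => (1 + (n : ℝ)) ^ (-s)) := by
    have h0 : Summable (fun n : ℕ => 1 / (n : ℝ) ^ s) := Real.summable_one_div_nat_rpow.2 hs
    have h1 : Summable (fun n : ℕ => 1 / ((n + 1 : ℕ) : ℝ) ^ s) :=
      (summable_nat_add_iff 1).2 h0
    refine h1.congr fun n => ?_
    rw [Real.rpow_neg (by positivity), one_div]
    congr 2
    push_cast
    ring
  refine Summable.of_nat_of_neg ?_ ?_ <;>
  · refine hnat.congr fun n => ?_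
    congr 1
    simp [abs_of_nonneg]

lemma summable_inv_one_add_rpow (ν : ℕ) (hν : 1 ≤ ν) (L : ℝ) (hL : 0 < L)
    {p : ℝ} (hp : (ν : ℝ) < p) :
    Summable (fun z : Fin ν → ℤ => (1 + ‖latticePt ν L z‖ ^ p)⁻¹) := by
  have hν' : (0:ℝ) < ν := by exact_mod_cast hν
  have hν1 : (1:ℝ) ≤ ν := by exact_mod_cast hν
  set M : ℝ := (2 * π / L) / ν with hMdef
  have hM : 0 < M := by positivity
  have hp0 : 0 < p := lt_of_lt_of_le hν' hp.le
  set s : ℝ := p / ν with hsdef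
  have hs : 1 < s := (one_lt_div hν').2 hp
  have hsν : s * ν = p := by rw [hsdef]; field_simp
  set K : ℝ := 2 ^ p * max 1 (M ^ (-p)) with hKdef
  have hK : 0 < K := by positivity
  have hsum := ((summable_pi_prod (g := fun n : ℤ => (1 + |(n : ℝ)|) ^ (-s))
    (fun n => Real.rpow_nonneg (by positivity) _) (summable_coord_rpow hs) ν).mul_left K)
  refine Summable.of_nonneg_of_le (fun z => by positivity) (fun z => ?_) hsum
  set S : ℝ := ∑ i, |(z i : ℝ)| with hSdef
  have hS0 : 0 ≤ S := Finset.sum_nonneg fun i _ => abs_nonneg _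
  set N : ℝ := ‖latticePt ν L z‖ with hNdef
  have hN0 : 0 ≤ N := norm_nonneg _
  have hNS : M * S ≤ N := sum_abs_le_norm ν L hL hν z
  -- step 3 : ∏ (1+|z_i|)^s ≤ (1+S)^p
  have step3 : (∏ i, (1 + |(z i : ℝ)|) ^ s) ≤ (1 + S) ^ p := by
    have h1 : (∏ i, (1 + |(z i : ℝ)|) ^ s) ≤ ∏ _i : Fin ν, (1 + S) ^ s := by
      refine Finset.prod_le_prod (fun i _ => Real.rpow_nonneg (by positivity) _) ?_
      intro i _
      refine Real.rpow_le_rpow (by positivity) ?_ (by linarith : (0:ℝ) ≤ s)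
      have : |(z i : ℝ)| ≤ S := Finset.single_le_sum
        (f := fun j => |(z j : ℝ)|) (fun j _ => abs_nonneg _) (Finset.mem_univ i)
      linarith
    have h2 : (∏ _i : Fin ν, (1 + S) ^ s) = (1 + S) ^ p := by
      rw [Finset.prod_const, Finset.card_univ, Fintype.card_fin,
        ← Real.rpow_natCast ((1 + S) ^ s) ν, ← Real.rpow_mul (by positivity), hsν]
    linarith [h1, h2.le, h2.ge]
  -- step 4 : (1+S)^p ≤ K * (1+(M*S)^p)
  have step4 : (1 + S) ^ p ≤ K * (1 + (M * S) ^ p) := by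
    have ha : 1 + S ≤ 2 * max 1 S := by
      rcases le_total S 1 with h | h
      · rw [max_eq_left h]; linarith
      · rw [max_eq_right h]; linarith
    have hb : (1 + S) ^ p ≤ 2 ^ p * (max 1 S) ^ p := by
      rw [← Real.mul_rpow (by norm_num) (le_max_of_le_left zero_le_one)]
      exact Real.rpow_le_rpow (by positivity) ha hp0.le
    have hc : (max 1 S) ^ p ≤ 1 + S ^ p := by
      rcases le_total S 1 with h | h
      · rw [max_eq_left h, Real.one_rpow]
        have := Real.rpow_nonneg hS0 p
        linarith
      · rw [max_eq_right h]
        have : (0:ℝ) ≤ 1 := zero_le_one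
        linarith
    have hd : S ^ p = M ^ (-p) * (M * S) ^ p := by
      rw [Real.mul_rpow hM.le hS0, Real.rpow_neg hM.le]
      field_simp
    have he : 1 + S ^ p ≤ max 1 (M ^ (-p)) * (1 + (M * S) ^ p) := by
      have h1 : (1:ℝ) ≤ max 1 (M ^ (-p)) := le_max_left _ _
      have h2 : M ^ (-p) ≤ max 1 (M ^ (-p)) := le_max_right _ _
      have h3 : (0:ℝ) ≤ (M * S) ^ p := Real.rpow_nonneg (by positivity) _
      rw [hd]
      nlinarith
    calc (1 + S) ^ p ≤ 2 ^ p * (max 1 S) ^ p := hb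
      _ ≤ 2 ^ p * (1 + S ^ p) := by
          have : (0:ℝ) < 2 ^ p := Real.rpow_pos_of_pos (by norm_num) _
          nlinarith
      _ ≤ 2 ^ p * (max 1 (M ^ (-p)) * (1 + (M * S) ^ p)) := by
          have : (0:ℝ) < 2 ^ p := Real.rpow_pos_of_pos (by norm_num) _
          nlinarith
      _ = K * (1 + (M * S) ^ p) := by rw [hKdef]; ring
  -- combine
  have hx : (0:ℝ) < 1 + (M * S) ^ p := by positivity
  have hy : (0:ℝ) < (1 + S) ^ p := Real.rpow_pos_of_pos (by linarith) _
  have step1 : (1 + N ^ p)⁻¹ ≤ (1 + (M * S) ^ p)⁻¹ := by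
    have : (M * S) ^ p ≤ N ^ p := Real.rpow_le_rpow (by positivity) hNS hp0.le
    apply inv_anti₀ hx
    linarith
  have step2 : (1 + (M * S) ^ p)⁻¹ ≤ K / (1 + S) ^ p := by
    have h1 : (1 + S) ^ p / K ≤ 1 + (M * S) ^ p := by
      rw [div_le_iff₀ hK]
      linarith [step4]
    have h2 : 1 / (1 + (M * S) ^ p) ≤ 1 / ((1 + S) ^ p / K) :=
      one_div_le_one_div_of_le (by positivity) h1
    rw [one_div_div] at h2
    rwa [inv_eq_one_div]
  have step5 : K / (1 + S) ^ p ≤ K * ∏ i, (1 + |(z i : ℝ)|) ^ (-s) := by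
    have hprod : (∏ i, (1 + |(z i : ℝ)|) ^ (-s)) = (∏ i, (1 + |(z i : ℝ)|) ^ s)⁻¹ := by
      rw [← Finset.prod_inv_distrib]
      exact Finset.prod_congr rfl fun i _ => Real.rpow_neg (by positivity) _
    rw [hprod, div_eq_mul_inv]
    have hpp : (0:ℝ) < ∏ i, (1 + |(z i : ℝ)|) ^ s :=
      Finset.prod_pos fun i _ => Real.rpow_pos_of_pos (by positivity) _
    have := one_div_le_one_div_of_le hpp step3
    rw [one_div, one_div] at this
    exact mul_le_mul_of_nonneg_left this hK.le
  calc (1 + N ^ p)⁻¹ ≤ (1 + (M * S) ^ p)⁻¹ := step1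
    _ ≤ K / (1 + S) ^ p := step2
    _ ≤ K * ∏ i, (1 + |(z i : ℝ)|) ^ (-s) := step5

lemma summable_lam_lattice (ν : ℕ) (hν : 1 ≤ ν) (L : ℝ) (hL : 0 < L)
    (lam : Kspace ν → ℂ) (c δ : ℝ) (hδ : 0 < δ)
    (hdec : ∀ k : Kspace ν, ‖lam k‖ ≤ c / (1 + ‖k‖ ^ (max (ν : ℝ) ((ν : ℝ) / 2 + 1) + δ))) :
    Summable (fun z : Fin ν → ℤ => ‖lam (latticePt ν L z)‖) := by
  set p : ℝ := max (ν : ℝ) ((ν : ℝ) / 2 + 1) + δ with hpdef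
  have hp : (ν : ℝ) < p := by
    have := le_max_left (ν : ℝ) ((ν : ℝ) / 2 + 1)
    rw [hpdef]; linarith
  have hc : 0 ≤ c := by
    have h := (norm_nonneg (lam 0)).trans (hdec 0)
    by_contra hneg
    push_neg at hneg
    have hnum : c / (1 + ‖(0 : Kspace ν)‖ ^ p) < 0 := by
      apply div_neg_of_neg_of_pos hneg
      positivity
    linarith
  have hsum := (summable_inv_one_add_rpow ν hν L hL hp).mul_left c
  refine Summable.of_nonneg_of_le (fun z => norm_nonneg _) (fun z => ?_) hsum
  refine (hdec _).trans (le_of_eq ?_)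
  rw [div_eq_mul_inv]

section perk
variable {ν : ℕ} {m μ v u q s : ℝ} {lam : Kspace ν → ℂ} {k : Kspace ν} {ρ : ℝ}

lemma eps_nonneg (hm : 0 < m) : 0 ≤ eps ν m k := by unfold eps; positivity

lemma darg_ge (hq : 0 ≤ q) (hlam : ‖lam k‖ ≤ 1) (hs : 0 < s)
    (hσ : eps ν m k + |u| * q + s ≤ fF ν m μ v k ρ) (heps : 0 ≤ eps ν m k) :
    s * fF ν m μ v k ρ ≤ fF ν m μ v k ρ ^ 2 - u ^ 2 * q ^ 2 * ‖lam k‖ ^ 2 := by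
  set F := fF ν m μ v k ρ with hF
  have h2 : ‖lam k‖ ^ 2 ≤ 1 := by nlinarith [norm_nonneg (lam k)]
  have h3 : u ^ 2 * q ^ 2 * ‖lam k‖ ^ 2 ≤ (|u| * q) ^ 2 := by
    have : (|u| * q) ^ 2 = u ^ 2 * q ^ 2 := by rw [mul_pow, sq_abs]
    nlinarith [sq_nonneg (u * q), norm_nonneg (lam k)]
  have h4 : |u| * q + s ≤ F := by linarith
  nlinarith [mul_nonneg (abs_nonneg u) hq]

lemma eE_sq (hq : 0 ≤ q) (hlam : ‖lam k‖ ≤ 1) (hs : 0 < s)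
    (hσ : eps ν m k + |u| * q + s ≤ fF ν m μ v k ρ) (heps : 0 ≤ eps ν m k) :
    eE ν m μ v u lam k q ρ ^ 2 = fF ν m μ v k ρ ^ 2 - u ^ 2 * q ^ 2 * ‖lam k‖ ^ 2 := by
  have h1 := darg_ge hq hlam hs hσ heps
  have hF : s ≤ fF ν m μ v k ρ := by nlinarith [mul_nonneg (abs_nonneg u) hq]
  rw [eE, Real.sq_sqrt]
  nlinarith

lemma s_le_eE (hq : 0 ≤ q) (hlam : ‖lam k‖ ≤ 1) (hs : 0 < s)
    (hσ : eps ν m k + |u| * q + s ≤ fF ν m μ v k ρ) (heps : 0 ≤ eps ν m k) :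
    s ≤ eE ν m μ v u lam k q ρ := by
  have h1 := darg_ge hq hlam hs hσ heps
  have hF : s ≤ fF ν m μ v k ρ := by nlinarith [mul_nonneg (abs_nonneg u) hq]
  rw [eE]
  rw [show s = Real.sqrt (s ^ 2) by rw [Real.sqrt_sq hs.le]]
  apply Real.sqrt_le_sqrt
  nlinarith

lemma eE_le_fF (hq : 0 ≤ q) (hlam : ‖lam k‖ ≤ 1) (hs : 0 < s)
    (hσ : eps ν m k + |u| * q + s ≤ fF ν m μ v k ρ) (heps : 0 ≤ eps ν m k) :
    eE ν m μ v u lam k q ρ ≤ fF ν m μ v k ρ := by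
  have hF : s ≤ fF ν m μ v k ρ := by nlinarith [mul_nonneg (abs_nonneg u) hq]
  rw [eE]
  calc Real.sqrt (fF ν m μ v k ρ ^ 2 - u ^ 2 * q ^ 2 * ‖lam k‖ ^ 2)
      ≤ Real.sqrt (fF ν m μ v k ρ ^ 2) := by
        apply Real.sqrt_le_sqrt
        nlinarith [sq_nonneg (u * q * ‖lam k‖), norm_nonneg (lam k)]
    _ = fF ν m μ v k ρ := by rw [Real.sqrt_sq (by linarith)]

lemma sqrt_sf_le_eE (hq : 0 ≤ q) (hlam : ‖lam k‖ ≤ 1) (hs : 0 < s)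
    (hσ : eps ν m k + |u| * q + s ≤ fF ν m μ v k ρ) (heps : 0 ≤ eps ν m k) :
    Real.sqrt (s * eps ν m k) ≤ eE ν m μ v u lam k q ρ := by
  have h1 := darg_ge hq hlam hs hσ heps
  have hF : eps ν m k ≤ fF ν m μ v k ρ := by nlinarith [mul_nonneg (abs_nonneg u) hq]
  rw [eE]
  apply Real.sqrt_le_sqrt
  nlinarith


lemma hasDerivAt_fF : HasDerivAt (fun ρ => fF ν m μ v k ρ) v ρ := by
  have h : HasDerivAt (fun ρ : ℝ => eps ν m k - μ + v * ρ) (v * 1) ρ :=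
    ((hasDerivAt_id ρ).const_mul v).const_add _
  simpa [fF] using h

lemma hasDerivAt_eE (hq : 0 ≤ q) (hlam : ‖lam k‖ ≤ 1) (hs : 0 < s)
    (hσ : eps ν m k + |u| * q + s ≤ fF ν m μ v k ρ) (heps : 0 ≤ eps ν m k) :
    HasDerivAt (fun ρ => eE ν m μ v u lam k q ρ)
      (v * fF ν m μ v k ρ / eE ν m μ v u lam k q ρ) ρ := by
  have h1 := darg_ge hq hlam hs hσ heps
  have hF : s ≤ fF ν m μ v k ρ := by nlinarith [mul_nonneg (abs_nonneg u) hq]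
  have hpos : 0 < fF ν m μ v k ρ ^ 2 - u ^ 2 * q ^ 2 * ‖lam k‖ ^ 2 := by nlinarith
  have hinner : HasDerivAt
      (fun ρ => fF ν m μ v k ρ ^ 2 - u ^ 2 * q ^ 2 * ‖lam k‖ ^ 2)
      (2 * fF ν m μ v k ρ * v) ρ := by
    have h2 := (hasDerivAt_fF (ν := ν) (m := m) (μ := μ) (v := v) (k := k) (ρ := ρ)).pow 2
    have h3 := h2.sub_const (u ^ 2 * q ^ 2 * ‖lam k‖ ^ 2)
    simpa using h3
  have hsqrt := (Real.hasDerivAt_sqrt (ne_of_gt hpos)).comp ρ hinner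
  have hEpos : 0 < eE ν m μ v u lam k q ρ := lt_of_lt_of_le hs (s_le_eE hq hlam hs hσ heps)
  have heq : eE ν m μ v u lam k q ρ
      = Real.sqrt (fF ν m μ v k ρ ^ 2 - u ^ 2 * q ^ 2 * ‖lam k‖ ^ 2) := rfl
  have hmain : HasDerivAt (fun ρ => eE ν m μ v u lam k q ρ)
      (1 / (2 * Real.sqrt (fF ν m μ v k ρ ^ 2 - u ^ 2 * q ^ 2 * ‖lam k‖ ^ 2))
        * (2 * fF ν m μ v k ρ * v)) ρ := hsqrt
  convert hmain using 1
  rw [← heq]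
  field_simp

lemma exp_ratio {x : ℝ} (hx : 0 < x) :
    Real.exp (-x) / (1 - Real.exp (-x)) = (Real.exp x - 1)⁻¹ := by
  have h2 : (1:ℝ) < Real.exp x := by
    have := Real.exp_lt_exp.2 hx
    rwa [Real.exp_zero] at this
  have h3 : Real.exp (-x) = (Real.exp x)⁻¹ := Real.exp_neg x
  have h4 : Real.exp x ≠ 0 := by positivity
  have h5 : Real.exp x - 1 ≠ 0 := by linarith
  rw [h3]
  field_simp

lemma one_sub_exp_pos {β E : ℝ} (hβ : 0 < β) (hE : 0 < E) :
    0 < 1 - Real.exp (-β * E) := by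
  have : Real.exp (-β * E) < 1 := by
    rw [Real.exp_lt_one_iff]
    nlinarith
  linarith

lemma hasDerivAt_logterm (hβ : 0 < β) (hq : 0 ≤ q) (hlam : ‖lam k‖ ≤ 1) (hs : 0 < s)
    (hσ : eps ν m k + |u| * q + s ≤ fF ν m μ v k ρ) (heps : 0 ≤ eps ν m k) :
    HasDerivAt (fun ρ => Real.log (1 - Real.exp (-β * eE ν m μ v u lam k q ρ)))
      (β * v * (fF ν m μ v k ρ / eE ν m μ v u lam k q ρ) *
        (Real.exp (β * eE ν m μ v u lam k q ρ) - 1)⁻¹) ρ := by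
  have hE := hasDerivAt_eE hq hlam hs hσ heps
  have hEpos : 0 < eE ν m μ v u lam k q ρ := lt_of_lt_of_le hs (s_le_eE hq hlam hs hσ heps)
  have hexp := (hE.const_mul (-β)).exp
  have h1 := hexp.const_sub 1
  have hlogpos := one_sub_exp_pos hβ hEpos
  have hlog := h1.log (ne_of_gt hlogpos)
  convert hlog using 1
  rw [← exp_ratio (mul_pos hβ hEpos)]
  have hEne : eE ν m μ v u lam k q ρ ≠ 0 := ne_of_gt hEpos
  have hd : 1 - Real.exp (-(β * eE ν m μ v u lam k q ρ)) ≠ 0 := by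
    rw [show -(β * eE ν m μ v u lam k q ρ) = -β * eE ν m μ v u lam k q ρ by ring]
    exact ne_of_gt hlogpos
  rw [show (-β * eE ν m μ v u lam k q ρ) = -(β * eE ν m μ v u lam k q ρ) by ring]
  field_simp

lemma logterm_deriv_bound (hβ : 0 < β) (hv : 0 < v) (hq : 0 ≤ q) (hlam : ‖lam k‖ ≤ 1)
    (hs : 0 < s) (hσ : eps ν m k + |u| * q + s ≤ fF ν m μ v k ρ) (heps : 0 ≤ eps ν m k)
    {C : ℝ} (hC : 0 ≤ C) (hFC : fF ν m μ v k ρ ≤ eps ν m k + C) :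
    |β * v * (fF ν m μ v k ρ / eE ν m μ v u lam k q ρ) *
        (Real.exp (β * eE ν m μ v u lam k q ρ) - 1)⁻¹|
      ≤ β * v / (s * (1 - Real.exp (-β * s))) * ((eps ν m k + C) *
          Real.exp (-β * Real.sqrt (s * eps ν m k))) := by
  set F := fF ν m μ v k ρ with hFdef
  set E := eE ν m μ v u lam k q ρ with hEdef
  have hEpos : 0 < E := lt_of_lt_of_le hs (s_le_eE hq hlam hs hσ heps)
  have hsE : s ≤ E := s_le_eE hq hlam hs hσ heps
  have hFpos : 0 < F := by nlinarith [mul_nonneg (abs_nonneg u) hq]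
  have hewpos : 0 < Real.exp (β * E) - 1 := by
    have : (1:ℝ) = Real.exp 0 := (Real.exp_zero).symm
    nlinarith [Real.exp_lt_exp.2 (mul_pos hβ hEpos), Real.exp_zero]
  have habs : |β * v * (F / E) * (Real.exp (β * E) - 1)⁻¹|
      = β * v * (F / E) * (Real.exp (β * E) - 1)⁻¹ := by
    apply abs_of_nonneg
    positivity
  rw [habs]
  have hd0 : 0 < 1 - Real.exp (-β * s) := one_sub_exp_pos hβ hs
  have hsqE : Real.sqrt (s * eps ν m k) ≤ E := sqrt_sf_le_eE hq hlam hs hσ heps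
  -- (exp(βE)-1)⁻¹ = exp(-βE)/(1-exp(-βE)) ≤ exp(-β sqrt(s ε))/(1-exp(-βs))
  have hinv : (Real.exp (β * E) - 1)⁻¹
      ≤ Real.exp (-β * Real.sqrt (s * eps ν m k)) / (1 - Real.exp (-β * s)) := by
    rw [← exp_ratio (mul_pos hβ hEpos)]
    rw [show -(β * E) = -β * E by ring]
    have h1 : Real.exp (-β * E) ≤ Real.exp (-β * Real.sqrt (s * eps ν m k)) := by
      apply Real.exp_le_exp.2
      nlinarith
    have h2 : 1 - Real.exp (-β * s) ≤ 1 - Real.exp (-β * E) := by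
      have : Real.exp (-β * E) ≤ Real.exp (-β * s) := by
        apply Real.exp_le_exp.2
        nlinarith
      linarith
    exact div_le_div₀ (Real.exp_pos _).le h1 hd0 h2
  have hFE : F / E ≤ (eps ν m k + C) / s := div_le_div₀ (by linarith) hFC hs hsE
  calc β * v * (F / E) * (Real.exp (β * E) - 1)⁻¹
      ≤ β * v * ((eps ν m k + C) / s) *
        (Real.exp (-β * Real.sqrt (s * eps ν m k)) / (1 - Real.exp (-β * s))) := by
        apply mul_le_mul
        · exact mul_le_mul_of_nonneg_left hFE (by positivity)
        · exact hinv
        · positivity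
        · positivity
    _ = β * v / (s * (1 - Real.exp (-β * s))) * ((eps ν m k + C) *
          Real.exp (-β * Real.sqrt (s * eps ν m k))) := by
        field_simp

lemma subterm_deriv_bound (hv : 0 < v) (hq : 0 ≤ q) (hlam : ‖lam k‖ ≤ 1)
    (hs : 0 < s) (hσ : eps ν m k + |u| * q + s ≤ fF ν m μ v k ρ) (heps : 0 ≤ eps ν m k) :
    |v * (fF ν m μ v k ρ / eE ν m μ v u lam k q ρ - 1)|
      ≤ v * u ^ 2 * q ^ 2 / s ^ 2 * ‖lam k‖ := by
  set F := fF ν m μ v k ρ with hFdef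
  set E := eE ν m μ v u lam k q ρ with hEdef
  set l := ‖lam k‖ with hldef
  have hl0 : 0 ≤ l := norm_nonneg _
  have hEpos : 0 < E := lt_of_lt_of_le hs (s_le_eE hq hlam hs hσ heps)
  have hsE : s ≤ E := s_le_eE hq hlam hs hσ heps
  have hEF : E ≤ F := eE_le_fF hq hlam hs hσ heps
  have hE2 := eE_sq hq hlam hs hσ heps
  have hFE : (F - E) * (F + E) = u ^ 2 * q ^ 2 * l ^ 2 := by
    rw [hFdef, hEdef, hldef]
    nlinarith [hE2]
  have habs : |v * (F / E - 1)| = v * (F / E - 1) := by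
    apply abs_of_nonneg
    have : 1 ≤ F / E := (one_le_div hEpos).2 hEF
    nlinarith
  rw [habs]
  have h2 : F - E ≤ u ^ 2 * q ^ 2 * l ^ 2 / s := by
    rw [le_div_iff₀ hs]
    nlinarith
  have h3 : F / E - 1 = (F - E) / E := by field_simp
  have h4 : (F - E) / E ≤ (u ^ 2 * q ^ 2 * l ^ 2 / s) / s :=
    div_le_div₀ (by positivity) h2 hs hsE
  have h5 : l ^ 2 ≤ l := by nlinarith
  have h6 : (u ^ 2 * q ^ 2 * l ^ 2 / s) / s = u ^ 2 * q ^ 2 / s ^ 2 * l ^ 2 := by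
    ring
  rw [h3]
  calc v * ((F - E) / E) ≤ v * (u ^ 2 * q ^ 2 / s ^ 2 * l ^ 2) := by
        rw [← h6]
        exact mul_le_mul_of_nonneg_left h4 hv.le
    _ ≤ v * u ^ 2 * q ^ 2 / s ^ 2 * l := by
        have h7 : u ^ 2 * q ^ 2 / s ^ 2 * l ^ 2 ≤ u ^ 2 * q ^ 2 / s ^ 2 * l :=
          mul_le_mul_of_nonneg_left h5 (by positivity)
        calc v * (u ^ 2 * q ^ 2 / s ^ 2 * l ^ 2) ≤ v * (u ^ 2 * q ^ 2 / s ^ 2 * l) :=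
              mul_le_mul_of_nonneg_left h7 hv.le
          _ = v * u ^ 2 * q ^ 2 / s ^ 2 * l := by ring

lemma logterm_bound (hβ : 0 < β) (hq : 0 ≤ q) (hlam : ‖lam k‖ ≤ 1)
    (hs : 0 < s) (hσ : eps ν m k + |u| * q + s ≤ fF ν m μ v k ρ) (heps : 0 ≤ eps ν m k) :
    |Real.log (1 - Real.exp (-β * eE ν m μ v u lam k q ρ))|
      ≤ (1 - Real.exp (-β * s))⁻¹ * Real.exp (-β * Real.sqrt (s * eps ν m k)) := by
  set E := eE ν m μ v u lam k q ρ with hEdef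
  have hEpos : 0 < E := lt_of_lt_of_le hs (s_le_eE hq hlam hs hσ heps)
  have hsE : s ≤ E := s_le_eE hq hlam hs hσ heps
  set x := Real.exp (-β * E) with hxdef
  have hx0 : 0 < x := Real.exp_pos _
  have hx1 : 0 < 1 - x := one_sub_exp_pos hβ hEpos
  have hd0 : 0 < 1 - Real.exp (-β * s) := one_sub_exp_pos hβ hs
  have hxd : 1 - Real.exp (-β * s) ≤ 1 - x := by
    have : x ≤ Real.exp (-β * s) := Real.exp_le_exp.2 (by nlinarith)
    linarith
  have hlog_np : Real.log (1 - x) ≤ 0 := Real.log_nonpos hx1.le (by linarith)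
  rw [abs_of_nonpos hlog_np]
  have h1 : -Real.log (1 - x) = Real.log (1 - x)⁻¹ := (Real.log_inv _).symm
  have h2 : Real.log (1 - x)⁻¹ ≤ (1 - x)⁻¹ - 1 := by
    have := Real.log_le_sub_one_of_pos (inv_pos.2 hx1)
    linarith
  have h3 : (1 - x)⁻¹ - 1 = x / (1 - x) := by field_simp; ring
  have h4 : x / (1 - x) ≤ x / (1 - Real.exp (-β * s)) := by
    apply div_le_div₀ hx0.le le_rfl hd0 hxd
  have h5 : x ≤ Real.exp (-β * Real.sqrt (s * eps ν m k)) := by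
    apply Real.exp_le_exp.2
    have := sqrt_sf_le_eE (u := u) hq hlam hs hσ heps
    nlinarith [this]
  calc -Real.log (1 - x) ≤ x / (1 - Real.exp (-β * s)) := by
        rw [h1]; linarith [h2, h3, h4]
    _ ≤ (1 - Real.exp (-β * s))⁻¹ * Real.exp (-β * Real.sqrt (s * eps ν m k)) := by
        rw [div_eq_inv_mul]
        exact mul_le_mul_of_nonneg_left h5 (by positivity)

lemma subterm_bound (hq : 0 ≤ q) (hlam : ‖lam k‖ ≤ 1)
    (hs : 0 < s) (hσ : eps ν m k + |u| * q + s ≤ fF ν m μ v k ρ) (heps : 0 ≤ eps ν m k) :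
    |eE ν m μ v u lam k q ρ - fF ν m μ v k ρ| ≤ u ^ 2 * q ^ 2 / s * ‖lam k‖ := by
  set F := fF ν m μ v k ρ with hFdef
  set E := eE ν m μ v u lam k q ρ with hEdef
  set l := ‖lam k‖ with hldef
  have hl0 : 0 ≤ l := norm_nonneg _
  have hEpos : 0 < E := lt_of_lt_of_le hs (s_le_eE hq hlam hs hσ heps)
  have hsE : s ≤ E := s_le_eE hq hlam hs hσ heps
  have hEF : E ≤ F := eE_le_fF hq hlam hs hσ heps
  have hE2 := eE_sq hq hlam hs hσ heps
  have hFE : (F - E) * (F + E) = u ^ 2 * q ^ 2 * l ^ 2 := by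
    rw [hFdef, hEdef, hldef]
    nlinarith [hE2]
  rw [abs_of_nonpos (by linarith), neg_sub]
  have h2 : F - E ≤ u ^ 2 * q ^ 2 * l ^ 2 / s := by
    rw [le_div_iff₀ hs]
    nlinarith
  have h5 : l ^ 2 ≤ l := by nlinarith
  calc F - E ≤ u ^ 2 * q ^ 2 * l ^ 2 / s := h2
    _ = u ^ 2 * q ^ 2 / s * l ^ 2 := by ring
    _ ≤ u ^ 2 * q ^ 2 / s * l := mul_le_mul_of_nonneg_left h5 (by positivity)

lemma poly_absorb {c1 C x mm : ℝ} (hc1 : 0 < c1) (hC : 0 ≤ C) (hx : 0 ≤ x) (hmm : 0 < mm) :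
    (x ^ 2 / (2 * mm) + C) * Real.exp (-(c1 * x)) ≤
      (16 / (c1 ^ 2 * (2 * mm)) + C) * Real.exp (-(c1 / 2 * x)) := by
  have t1 : c1 * x / 4 ≤ Real.exp (c1 * x / 4) := by
    linarith [Real.add_one_le_exp (c1 * x / 4)]
  have hE : (0:ℝ) < Real.exp (c1 * x / 4) := Real.exp_pos _
  have hEE : Real.exp (c1 * x / 4) * Real.exp (c1 * x / 4) = Real.exp (c1 / 2 * x) := by
    rw [← Real.exp_add]; ring_nf
  have h1 : x ≤ 4 / c1 * Real.exp (c1 * x / 4) := by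
    rw [show 4 / c1 * Real.exp (c1 * x / 4) = (c1 * (4 / c1 * Real.exp (c1 * x / 4))) / c1 by
      field_simp]
    rw [le_div_iff₀ hc1]
    have : c1 * (4 / c1 * Real.exp (c1 * x / 4)) = 4 * Real.exp (c1 * x / 4) := by
      field_simp
    nlinarith [t1]
  have hx2 : x ^ 2 ≤ 16 / c1 ^ 2 * Real.exp (c1 / 2 * x) := by
    have h2 := mul_self_le_mul_self hx h1
    have h3 : 4 / c1 * Real.exp (c1 * x / 4) * (4 / c1 * Real.exp (c1 * x / 4))
        = 16 / c1 ^ 2 * Real.exp (c1 / 2 * x) := by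
      rw [← hEE]; field_simp; ring
    nlinarith [h2, h3]
  have hxe : Real.exp (-(c1 * x)) ≤ Real.exp (-(c1 / 2 * x)) := by
    apply Real.exp_le_exp.2; nlinarith
  have hprod : Real.exp (c1 / 2 * x) * Real.exp (-(c1 * x)) = Real.exp (-(c1 / 2 * x)) := by
    rw [← Real.exp_add]; ring_nf
  have e1 : (0:ℝ) < Real.exp (-(c1 * x)) := Real.exp_pos _
  calc (x ^ 2 / (2 * mm) + C) * Real.exp (-(c1 * x))
      ≤ (16 / c1 ^ 2 * Real.exp (c1 / 2 * x) / (2 * mm) + C) * Real.exp (-(c1 * x)) := by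
        apply mul_le_mul_of_nonneg_right _ e1.le
        have hq : x ^ 2 / (2 * mm) ≤ 16 / c1 ^ 2 * Real.exp (c1 / 2 * x) / (2 * mm) :=
          div_le_div_of_nonneg_right hx2 (by positivity)
        linarith
    _ = 16 / (c1 ^ 2 * (2 * mm)) * (Real.exp (c1 / 2 * x) * Real.exp (-(c1 * x)))
          + C * Real.exp (-(c1 * x)) := by ring
    _ ≤ 16 / (c1 ^ 2 * (2 * mm)) * Real.exp (-(c1 / 2 * x))
          + C * Real.exp (-(c1 / 2 * x)) := by
        rw [hprod]
        have h4 := mul_le_mul_of_nonneg_left hxe hC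
        have h5 : (0:ℝ) ≤ 16 / (c1 ^ 2 * (2 * mm)) := by positivity
        linarith
    _ = (16 / (c1 ^ 2 * (2 * mm)) + C) * Real.exp (-(c1 / 2 * x)) := by ring

end perk

set_option maxHeartbeats 1600000 in
theorem statement8
    (ν : ℕ) (hν : 1 ≤ ν) (m β μ u v : ℝ) (hm : 0 < m) (hβ : 0 < β)
    (hv : 0 < v) (hvu : 0 < v - u)
    (lam : Kspace ν → ℂ) (hmeas : Measurable lam) (hlam0 : lam 0 = 1)
    (hlam1 : ∀ k, ‖lam k‖ ≤ 1)
    (c δ : ℝ) (hδ : 0 < δ)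
    (hdec : ∀ k : Kspace ν, ‖lam k‖ ≤ c / (1 + ‖k‖ ^ (max (ν : ℝ) ((ν : ℝ) / 2 + 1) + δ)))
    (L : ℝ) (hL : 0 < L) (q : ℝ) (hq : 0 ≤ q) (η : ℝ) (hη : 0 ≤ η) :
    ∀ ρ : ℝ, 0 ≤ ρ → 0 < sigma0 μ v u q ρ →
      HasDerivAt (fun r : ℝ => p2Leta ν m μ v u β L lam q r η)
        (-(v / L ^ ν) * (∑' z : Fin ν → ℤ,
            ((Real.exp (β * eE ν m μ v u lam (latticePt ν L z) q ρ) - 1)⁻¹ *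
                (fF ν m μ v (latticePt ν L z) ρ / eE ν m μ v u lam (latticePt ν L z) q ρ)
              + (1 / 2) *
                (fF ν m μ v (latticePt ν L z) ρ / eE ν m μ v u lam (latticePt ν L z) q ρ - 1)))
          - v * η ^ 2 / (fF ν m μ v 0 ρ - u * q) ^ 2 + v * ρ) ρ := by
  intro ρ₀ hρ₀nn hσpos
  have hπ : 0 < π := Real.pi_pos
  set σ0 : ℝ := sigma0 μ v u q ρ₀ with hσ0def
  have hσ0 : 0 < σ0 := hσpos
  have hσ0eq : σ0 = v * ρ₀ - μ - |u| * q := by rw [hσ0def, sigma0]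
  set s : ℝ := σ0 / 2 with hsdef
  have hs : 0 < s := by positivity
  set rr : ℝ := σ0 / (2 * v) with hrrdef
  have hrr : 0 < rr := by positivity
  set t : Set ℝ := Set.Ioo (ρ₀ - rr) (ρ₀ + rr) with htdef
  have ht_open : IsOpen t := isOpen_Ioo
  have ht_conn : IsPreconnected t := isPreconnected_Ioo
  have hρ₀t : ρ₀ ∈ t := ⟨by linarith, by linarith⟩
  have hvr : v * rr = s := by rw [hrrdef, hsdef]; field_simp
  have heps : ∀ k : Kspace ν, 0 ≤ eps ν m k := fun k => eps_nonneg hm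
  have hkey : ∀ k : Kspace ν, ∀ ρ ∈ t, eps ν m k + |u| * q + s ≤ fF ν m μ v k ρ := by
    intro k ρ hρ
    have h1 : ρ₀ - rr < ρ := hρ.1
    have h2 : v * (ρ₀ - rr) ≤ v * ρ := by nlinarith
    have heq : v * ρ₀ - μ = 2 * s + |u| * q := by
      have : σ0 = 2 * s := by rw [hsdef]; ring
      linarith [hσ0eq]
    rw [fF]
    nlinarith [h2, hvr, heq]
  set C : ℝ := |μ| + v * (|ρ₀| + rr) with hCdef
  have hC : 0 ≤ C := by positivity
  have hFC : ∀ k : Kspace ν, ∀ ρ ∈ t, fF ν m μ v k ρ ≤ eps ν m k + C := by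
    intro k ρ hρ
    have h1 : ρ ≤ ρ₀ + rr := le_of_lt hρ.2
    have h2 : v * ρ ≤ v * (|ρ₀| + rr) := by
      have h3 : ρ ≤ |ρ₀| + rr := le_trans h1 (by linarith [le_abs_self ρ₀])
      nlinarith
    rw [fF]
    have := neg_abs_le μ
    rw [hCdef]
    linarith
  set c1 : ℝ := β * Real.sqrt (s / (2 * m)) with hc1def
  have hsq2m : 0 < Real.sqrt (s / (2 * m)) := Real.sqrt_pos.2 (by positivity)
  have hc1 : 0 < c1 := by rw [hc1def]; positivity
  have hd0 : 0 < 1 - Real.exp (-β * s) := one_sub_exp_pos hβ hs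
  have hsqrt_eps : ∀ k : Kspace ν, β * Real.sqrt (s * eps ν m k) = c1 * ‖k‖ := by
    intro k
    rw [eps, show s * (‖k‖ ^ 2 / (2 * m)) = s / (2 * m) * ‖k‖ ^ 2 by ring,
      Real.sqrt_mul (by positivity) (‖k‖ ^ 2), Real.sqrt_sq (norm_nonneg k), hc1def]
    ring
  set K2 : ℝ := 16 / (c1 ^ 2 * (2 * m)) + C with hK2def
  have hpoly : ∀ k : Kspace ν,
      (eps ν m k + C) * Real.exp (-β * Real.sqrt (s * eps ν m k))
        ≤ K2 * Real.exp (-(c1 / 2 * ‖k‖)) := by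
    intro k
    have h1 : -β * Real.sqrt (s * eps ν m k) = -(c1 * ‖k‖) := by
      rw [← hsqrt_eps k]; ring
    rw [h1, hK2def, eps]
    exact poly_absorb hc1 hC (norm_nonneg k) hm
  -- the two bound sequences
  set u1 : (Fin ν → ℤ) → ℝ := fun z =>
    β * v / (s * (1 - Real.exp (-β * s))) * (K2 * Real.exp (-(c1 / 2 * ‖latticePt ν L z‖)))
    with hu1def
  have hu1 : Summable u1 :=
    (((summable_exp_lattice ν hν L hL (by positivity : (0:ℝ) < c1 / 2)).mul_left K2).mul_left _)
  set u2 : (Fin ν → ℤ) → ℝ := fun z =>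
    v * u ^ 2 * q ^ 2 / s ^ 2 * ‖lam (latticePt ν L z)‖ with hu2def
  have hu2 : Summable u2 :=
    ((summable_lam_lattice ν hν L hL lam c δ hδ hdec).mul_left _)
  -- summability at ρ₀
  have hg0 : Summable (fun z : Fin ν → ℤ =>
      Real.log (1 - Real.exp (-β * eE ν m μ v u lam (latticePt ν L z) q ρ₀))) := by
    apply Summable.of_norm_bounded
      (g := fun z => (1 - Real.exp (-β * s))⁻¹ * Real.exp (-(c1 * ‖latticePt ν L z‖)))
      ((summable_exp_lattice ν hν L hL hc1).mul_left _)
    intro z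
    rw [Real.norm_eq_abs]
    refine (logterm_bound hβ hq (hlam1 _) hs (hkey _ ρ₀ hρ₀t) (heps _)).trans (le_of_eq ?_)
    congr 1
    rw [show -β * Real.sqrt (s * eps ν m (latticePt ν L z)) = -(c1 * ‖latticePt ν L z‖) by
      rw [← hsqrt_eps]; ring]
  have hh0 : Summable (fun z : Fin ν → ℤ =>
      eE ν m μ v u lam (latticePt ν L z) q ρ₀ - fF ν m μ v (latticePt ν L z) ρ₀) := by
    apply Summable.of_norm_bounded
      (g := fun z => u ^ 2 * q ^ 2 / s * ‖lam (latticePt ν L z)‖)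
      ((summable_lam_lattice ν hν L hL lam c δ hδ hdec).mul_left _)
    intro z
    rw [Real.norm_eq_abs]
    exact subterm_bound hq (hlam1 _) hs (hkey _ ρ₀ hρ₀t) (heps _)
  -- term-by-term differentiation
  have H1 : HasDerivAt (fun ρ => ∑' z : Fin ν → ℤ,
        Real.log (1 - Real.exp (-β * eE ν m μ v u lam (latticePt ν L z) q ρ)))
      (∑' z : Fin ν → ℤ,
        β * v * (fF ν m μ v (latticePt ν L z) ρ₀ / eE ν m μ v u lam (latticePt ν L z) q ρ₀) *
          (Real.exp (β * eE ν m μ v u lam (latticePt ν L z) q ρ₀) - 1)⁻¹) ρ₀ := by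
    apply hasDerivAt_tsum_of_isPreconnected hu1 ht_open ht_conn
      (fun z ρ hρ => hasDerivAt_logterm hβ hq (hlam1 _) hs (hkey _ ρ hρ) (heps _))
      (fun z ρ hρ => ?_) hρ₀t hg0 hρ₀t
    rw [Real.norm_eq_abs]
    refine (logterm_deriv_bound hβ hv hq (hlam1 _) hs (hkey _ ρ hρ) (heps _) hC
      (hFC _ ρ hρ)).trans ?_
    exact mul_le_mul_of_nonneg_left (hpoly _) (by positivity)
  have H2 : HasDerivAt (fun ρ => ∑' z : Fin ν → ℤ,
        (eE ν m μ v u lam (latticePt ν L z) q ρ - fF ν m μ v (latticePt ν L z) ρ))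
      (∑' z : Fin ν → ℤ,
        v * (fF ν m μ v (latticePt ν L z) ρ₀ / eE ν m μ v u lam (latticePt ν L z) q ρ₀ - 1))
      ρ₀ := by
    apply hasDerivAt_tsum_of_isPreconnected hu2 ht_open ht_conn
      (fun z ρ hρ => ?_)
      (fun z ρ hρ => ?_) hρ₀t hh0 hρ₀t
    · have h := (hasDerivAt_eE (k := latticePt ν L z) (lam := lam) (q := q) (u := u) hq
        (hlam1 _) hs (hkey _ ρ hρ) (heps _)).sub
        (hasDerivAt_fF (ν := ν) (m := m) (μ := μ) (v := v) (k := latticePt ν L z) (ρ := ρ))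
      convert h using 1
      · rfl
      rw [mul_sub, mul_one, ← mul_div_assoc]
    · rw [Real.norm_eq_abs]
      exact subterm_deriv_bound hv hq (hlam1 _) hs (hkey _ ρ hρ) (heps _)
  -- elementary pieces
  have heps0 : eps ν m (0 : Kspace ν) = 0 := by rw [eps]; simp
  have hDnval : fF ν m μ v 0 ρ₀ - u * q = v * ρ₀ - μ - u * q := by
    rw [fF, heps0]; ring
  have huq : u * q ≤ |u| * q := mul_le_mul_of_nonneg_right (le_abs_self u) hq
  have hDnpos : 0 < fF ν m μ v 0 ρ₀ - u * q := by
    rw [hDnval]; linarith [hσ0eq]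
  have hden : HasDerivAt (fun ρ => fF ν m μ v 0 ρ - u * q) v ρ₀ :=
    (hasDerivAt_fF).sub_const _
  have hη2 : HasDerivAt (fun ρ => η ^ 2 / (fF ν m μ v 0 ρ - u * q))
      ((0 * (fF ν m μ v 0 ρ₀ - u * q) - η ^ 2 * v) / (fF ν m μ v 0 ρ₀ - u * q) ^ 2) ρ₀ :=
    (hasDerivAt_const ρ₀ (η ^ 2)).div hden (ne_of_gt hDnpos)
  have hsq : HasDerivAt (fun ρ : ℝ => v / 2 * ρ ^ 2) (v / 2 * (2 * ρ₀ ^ 1)) ρ₀ := by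
    have := (hasDerivAt_pow 2 ρ₀).const_mul (v / 2)
    simpa using this
  -- assemble
  have Hbig := ((((H1.const_mul (-(β * L ^ ν)⁻¹)).sub (H2.const_mul ((2 * L ^ ν)⁻¹))).sub_const
      (u / 2 * q ^ 2)).add hsq).add hη2
  have hgoal : HasDerivAt (fun r : ℝ => p2Leta ν m μ v u β L lam q r η)
      (((-(β * L ^ ν)⁻¹ * (∑' z : Fin ν → ℤ,
          β * v * (fF ν m μ v (latticePt ν L z) ρ₀ / eE ν m μ v u lam (latticePt ν L z) q ρ₀) *
            (Real.exp (β * eE ν m μ v u lam (latticePt ν L z) q ρ₀) - 1)⁻¹)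
        - (2 * L ^ ν)⁻¹ * (∑' z : Fin ν → ℤ,
          v * (fF ν m μ v (latticePt ν L z) ρ₀ / eE ν m μ v u lam (latticePt ν L z) q ρ₀ - 1)))
        + v / 2 * (2 * ρ₀ ^ 1))
        + (0 * (fF ν m μ v 0 ρ₀ - u * q) - η ^ 2 * v) / (fF ν m μ v 0 ρ₀ - u * q) ^ 2) ρ₀ := by
    simp only [p2Leta, p2L]
    exact Hbig
  -- rewrite the derivative into the required form
  convert hgoal using 1
  have hβv : (β : ℝ) * v ≠ 0 := by positivity
  have hP1sum : Summable (fun z : Fin ν → ℤ =>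
      (Real.exp (β * eE ν m μ v u lam (latticePt ν L z) q ρ₀) - 1)⁻¹ *
        (fF ν m μ v (latticePt ν L z) ρ₀ / eE ν m μ v u lam (latticePt ν L z) q ρ₀)) := by
    have hsum : Summable (fun z : Fin ν → ℤ =>
        β * v * (fF ν m μ v (latticePt ν L z) ρ₀ / eE ν m μ v u lam (latticePt ν L z) q ρ₀) *
          (Real.exp (β * eE ν m μ v u lam (latticePt ν L z) q ρ₀) - 1)⁻¹) := by
      apply Summable.of_norm_bounded hu1
      intro z
      rw [Real.norm_eq_abs]
      refine (logterm_deriv_bound hβ hv hq (hlam1 _) hs (hkey _ ρ₀ hρ₀t) (heps _) hC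
        (hFC _ ρ₀ hρ₀t)).trans ?_
      exact mul_le_mul_of_nonneg_left (hpoly _) (by positivity)
    have := hsum.div_const (β * v)
    refine this.congr fun z => ?_
    set A := fF ν m μ v (latticePt ν L z) ρ₀ / eE ν m μ v u lam (latticePt ν L z) q ρ₀
    set I := (Real.exp (β * eE ν m μ v u lam (latticePt ν L z) q ρ₀) - 1)⁻¹
    calc β * v * A * I / (β * v) = A * I * (β * v) / (β * v) := by ring
      _ = A * I := by rw [mul_div_assoc, div_self hβv, mul_one]
      _ = I * A := mul_comm _ _
  have hP2sum : Summable (fun z : Fin ν → ℤ =>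
      fF ν m μ v (latticePt ν L z) ρ₀ / eE ν m μ v u lam (latticePt ν L z) q ρ₀ - 1) := by
    have hsum : Summable (fun z : Fin ν → ℤ =>
        v * (fF ν m μ v (latticePt ν L z) ρ₀ / eE ν m μ v u lam (latticePt ν L z) q ρ₀ - 1)) := by
      apply Summable.of_norm_bounded hu2
      intro z
      rw [Real.norm_eq_abs]
      exact subterm_deriv_bound hv hq (hlam1 _) hs (hkey _ ρ₀ hρ₀t) (heps _)
    have := hsum.div_const v
    refine this.congr fun z => ?_
    exact mul_div_cancel_left₀ _ (ne_of_gt hv)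
  have hS1 : (∑' z : Fin ν → ℤ,
      β * v * (fF ν m μ v (latticePt ν L z) ρ₀ / eE ν m μ v u lam (latticePt ν L z) q ρ₀) *
        (Real.exp (β * eE ν m μ v u lam (latticePt ν L z) q ρ₀) - 1)⁻¹)
      = (β * v) * ∑' z : Fin ν → ℤ,
        (Real.exp (β * eE ν m μ v u lam (latticePt ν L z) q ρ₀) - 1)⁻¹ *
          (fF ν m μ v (latticePt ν L z) ρ₀ / eE ν m μ v u lam (latticePt ν L z) q ρ₀) := by
    rw [← tsum_mul_left]
    exact tsum_congr fun z => by ring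
  have hS2 : (∑' z : Fin ν → ℤ,
      v * (fF ν m μ v (latticePt ν L z) ρ₀ / eE ν m μ v u lam (latticePt ν L z) q ρ₀ - 1))
      = v * ∑' z : Fin ν → ℤ,
        (fF ν m μ v (latticePt ν L z) ρ₀ / eE ν m μ v u lam (latticePt ν L z) q ρ₀ - 1) := by
    rw [← tsum_mul_left]
  have hsplit : (∑' z : Fin ν → ℤ,
      ((Real.exp (β * eE ν m μ v u lam (latticePt ν L z) q ρ₀) - 1)⁻¹ *
          (fF ν m μ v (latticePt ν L z) ρ₀ / eE ν m μ v u lam (latticePt ν L z) q ρ₀)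
        + 1 / 2 *
          (fF ν m μ v (latticePt ν L z) ρ₀ / eE ν m μ v u lam (latticePt ν L z) q ρ₀ - 1)))
      = (∑' z : Fin ν → ℤ,
          (Real.exp (β * eE ν m μ v u lam (latticePt ν L z) q ρ₀) - 1)⁻¹ *
            (fF ν m μ v (latticePt ν L z) ρ₀ / eE ν m μ v u lam (latticePt ν L z) q ρ₀))
        + 1 / 2 * (∑' z : Fin ν → ℤ,
          (fF ν m μ v (latticePt ν L z) ρ₀ / eE ν m μ v u lam (latticePt ν L z) q ρ₀ - 1)) := by
    rw [hP1sum.tsum_add (hP2sum.mul_left (1 / 2)), tsum_mul_left]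
  rw [hsplit, hS1, hS2]
  have hLν : (0:ℝ) < L ^ ν := by positivity
  field_simp
  ring

end PB
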